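/- Let X be an MPR process with polynomial martingales {M_n}. Then for every n ≥ 1, all nonnegative integers k_1, …, k_n, and all times 0 < s < u_1 < … < u_n, there exist continuous functions φ_j(u_1, …, u_n), j = 0, …, k_1 + … + k_n, such that almost surely E[M_{k_1}(u_1)·M_{k_2}(u_2)···M_{k_n}(u_n) | 𝔉_{≤s}] = Σ_{j=0}^{k_1+…+k_n} φ_j(u_1, …, u_n)·M_j(s). -/

import Mathlib

open MeasureTheory ProbabilityTheory Polynomial Filter Finset
open scoped ENNReal NNReal
set_option linter.unusedSectionVars false
set_option maxHeartbeats 1000000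

noncomputable section

variable {Ω : Type*}

/-- The σ-algebra of the past: `𝔉_{≤ s} = σ(X_u : 0 < u ≤ s)`. -/
def sigmaLE [MeasurableSpace Ω] (X : ℝ → Ω → ℝ) (s : ℝ) : MeasurableSpace Ω :=
  ⨆ u ∈ Set.Ioc (0 : ℝ) s, MeasurableSpace.comap (X u) inferInstance

/-- The σ-algebra of the future: `𝔉_{≥ s} = σ(X_u : u ≥ s)`. -/
def sigmaGE [MeasurableSpace Ω] (X : ℝ → Ω → ℝ) (s : ℝ) : MeasurableSpace Ω :=
  ⨆ u ∈ Set.Ici s, MeasurableSpace.comap (X u) inferInstance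

/-- The σ-algebra `𝔉_{s,u} = σ(𝔉_{≤ s} ∪ 𝔉_{≥ u})`. -/
def sigmaIntv [MeasurableSpace Ω] (X : ℝ → Ω → ℝ) (s u : ℝ) : MeasurableSpace Ω :=
  sigmaLE X s ⊔ sigmaGE X u

/-- A family of polynomial martingales for the process `X`:
`M n (·,t)` is a polynomial of degree exactly `n` with coefficients continuous in `t`,
`M 0 ≡ 1`, `E[M_n(X_t,t)] = 0` for `n ≥ 1`, and each `M_n(X_t,t)` is a martingale
with respect to the natural filtration of `X`. -/
structure IsPolyMartFamily [MeasurableSpace Ω] (μ : Measure Ω) (X : ℝ → Ω → ℝ)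
    (M : ℕ → ℝ → Polynomial ℝ) : Prop where
  meas : ∀ t : ℝ, 0 < t → Measurable (X t)
  moments : ∀ (n : ℕ) (t : ℝ), 0 < t → Integrable (fun ω => X t ω ^ n) μ
  degree_eq : ∀ (n : ℕ) (t : ℝ), 0 < t → (M n t).degree = n
  coeff_cont : ∀ n k : ℕ, ContinuousOn (fun t => (M n t).coeff k) (Set.Ioi 0)
  zeroth : ∀ t : ℝ, 0 < t → M 0 t = 1
  mean_zero : ∀ n : ℕ, 1 ≤ n → ∀ t : ℝ, 0 < t → ∫ ω, (M n t).eval (X t ω) ∂μ = 0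
  mart : ∀ (n : ℕ) (s t : ℝ), 0 < s → s < t →
    μ[fun ω => (M n t).eval (X t ω) | sigmaLE X s]
      =ᵐ[μ] fun ω => (M n s).eval (X s ω)

/-- `m_n(t) = E[M_n(X_t,t)²]`. -/
def mFun [MeasurableSpace Ω] (μ : Measure Ω) (X : ℝ → Ω → ℝ)
    (M : ℕ → ℝ → Polynomial ℝ) (n : ℕ) (t : ℝ) : ℝ :=
  ∫ ω, ((M n t).eval (X t ω)) ^ 2 ∂μ

/-- Standing regularity assumptions on the functions `m_n`: each `m_n` is continuous,
nondecreasing and strictly positive on `(0,∞)` and `m_n(s) → 0` as `s → 0+`. -/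
structure MRegular [MeasurableSpace Ω] (μ : Measure Ω) (X : ℝ → Ω → ℝ)
    (M : ℕ → ℝ → Polynomial ℝ) : Prop where
  cont : ∀ n : ℕ, ContinuousOn (mFun μ X M n) (Set.Ioi 0)
  mono : ∀ n : ℕ, MonotoneOn (mFun μ X M n) (Set.Ioi 0)
  pos : ∀ (n : ℕ) (t : ℝ), 0 < t → 0 < mFun μ X M n t
  tendsto_zero : ∀ n : ℕ, Tendsto (mFun μ X M n) (nhdsWithin 0 (Set.Ioi 0)) (nhds 0)

/-- A Markov process with polynomial regression (MPR): `X` is Markov, the moment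
generating function of each `X_t` exists in a neighbourhood of `0`, and every
conditional moment `E[X_t^n | 𝔉_{≤ s}]` is a polynomial of degree `n` in `X_s`. -/
structure IsMPR [MeasurableSpace Ω] (μ : Measure Ω) (X : ℝ → Ω → ℝ) : Prop where
  meas : ∀ t : ℝ, 0 < t → Measurable (X t)
  moments : ∀ (n : ℕ) (t : ℝ), 0 < t → Integrable (fun ω => X t ω ^ n) μ
  markov : ∀ (s t : ℝ), 0 < s → s < t → ∀ f : ℝ → ℝ, Measurable f →
    Integrable (fun ω => f (X t ω)) μ →
    μ[fun ω => f (X t ω) | sigmaLE X s]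
      =ᵐ[μ] μ[fun ω => f (X t ω) | MeasurableSpace.comap (X s) inferInstance]
  mgf : ∀ t : ℝ, 0 < t → ∃ α : ℝ, 0 < α ∧
    Integrable (fun ω => Real.exp (α * |X t ω|)) μ
  polyReg : ∀ (n : ℕ) (s t : ℝ), 0 < s → s < t → ∃ p : Polynomial ℝ,
    p.degree = n ∧
      μ[fun ω => X t ω ^ n | sigmaLE X s] =ᵐ[μ] fun ω => p.eval (X s ω)

/-- `X` has independent increments: for all `0 < s < t` the increment `X_t - X_s`
is independent of `𝔉_{≤ s}`. -/
def HasIndepIncrements [MeasurableSpace Ω] (μ : Measure Ω) (X : ℝ → Ω → ℝ) : Prop :=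
  ∀ s t : ℝ, 0 < s → s < t →
    Indep (MeasurableSpace.comap (fun ω => X t ω - X s ω) inferInstance) (sigmaLE X s) μ

section LpAux

variable [MeasurableSpace Ω] {μ : Measure Ω} [IsProbabilityMeasure μ]

/-- f is in every `L^n`. -/
def AllM (μ : Measure Ω) (f : Ω → ℝ) : Prop := ∀ n : ℕ, MemLp f n μ

lemma ennreal_half_arith (n : ℕ) :
    (1 : ℝ≥0∞) / n = 1 / ((2 * n : ℕ) : ℝ≥0∞) + 1 / ((2 * n : ℕ) : ℝ≥0∞) := by
  rcases Nat.eq_zero_or_pos n with rfl | hn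
  · simp
  · push_cast
    rw [ENNReal.div_add_div_same]
    have h2 : ((2 : ℝ≥0∞)) ≠ 0 := by norm_num
    have h2' : ((2 : ℝ≥0∞)) ≠ ⊤ := by norm_num
    have : (1 : ℝ≥0∞) + 1 = 2 * 1 := by norm_num
    rw [this, ENNReal.mul_div_mul_left _ _ h2 h2']

lemma AllM.mul {f g : Ω → ℝ} (hf : AllM μ f) (hg : AllM μ g) :
    AllM μ (fun ω => f ω * g ω) := by
  intro n
  haveI hH : ENNReal.HolderTriple ((2 * n : ℕ) : ℝ≥0∞) ((2 * n : ℕ) : ℝ≥0∞) (n : ℝ≥0∞) :=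
    ⟨by have := ennreal_half_arith n; simp only [one_div] at this; exact this.symm⟩
  have h := (hg (2 * n)).smul (φ := f) (hf (2 * n)) (r := (n : ℝ≥0∞))
  simp only [smul_eq_mul] at h
  exact h

lemma AllM.const (c : ℝ) : AllM μ (fun _ => c) := fun _ => memLp_const c

lemma AllM.add {f g : Ω → ℝ} (hf : AllM μ f) (hg : AllM μ g) :
    AllM μ (fun ω => f ω + g ω) := fun n => (hf n).add (hg n)

lemma AllM.pow {f : Ω → ℝ} (hf : AllM μ f) (k : ℕ) :
    AllM μ (fun ω => f ω ^ k) := by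
  induction k with
  | zero => simpa using AllM.const 1
  | succ k ih =>
      have := ih.mul hf
      simpa [pow_succ] using this

lemma AllM.finsetSum {ι : Type*} (s : Finset ι) (F : ι → Ω → ℝ)
    (h : ∀ i ∈ s, AllM μ (F i)) : AllM μ (fun ω => ∑ i ∈ s, F i ω) := by
  classical
  induction s using Finset.induction_on with
  | empty => simpa using AllM.const 0
  | insert a s hne ih =>
      have h1 := h a (Finset.mem_insert_self a s)
      have h2 := ih (fun i hi => h i (Finset.mem_insert_of_mem hi))
      have := h1.add h2
      simpa [Finset.sum_insert hne] using this

lemma AllM.finsetProd {ι : Type*} (s : Finset ι) (F : ι → Ω → ℝ)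
    (h : ∀ i ∈ s, AllM μ (F i)) : AllM μ (fun ω => ∏ i ∈ s, F i ω) := by
  classical
  induction s using Finset.induction_on with
  | empty => simpa using AllM.const 1
  | insert a s hne ih =>
      have h1 := h a (Finset.mem_insert_self a s)
      have h2 := ih (fun i hi => h i (Finset.mem_insert_of_mem hi))
      have := h1.mul h2
      simpa [Finset.prod_insert hne] using this

lemma AllM.integrable {f : Ω → ℝ} (hf : AllM μ f) : Integrable f μ := by
  have := hf 1
  rw [Nat.cast_one] at this
  exact memLp_one_iff_integrable.mp this

lemma allM_of_moments {f : Ω → ℝ} (hf : Measurable f)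
    (h : ∀ n : ℕ, Integrable (fun ω => f ω ^ n) μ) : AllM μ f := by
  intro n
  rcases Nat.eq_zero_or_pos n with rfl | hn
  · simpa [memLp_zero_iff_aestronglyMeasurable] using hf.aestronglyMeasurable
  have hn0 : ((n : ℝ≥0∞)) ≠ 0 := by exact_mod_cast hn.ne'
  have hnt : ((n : ℝ≥0∞)) ≠ ⊤ := ENNReal.natCast_ne_top n
  have key : MemLp (fun ω => ‖f ω‖ ^ ((n : ℝ≥0∞)).toReal) ((n : ℝ≥0∞) / (n : ℝ≥0∞)) μ := by
    have ht : ((n : ℝ≥0∞)).toReal = (n : ℝ) := by simp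
    rw [ht, ENNReal.div_self hn0 hnt]
    have heq : (fun ω => ‖f ω‖ ^ (n : ℝ)) = fun ω => |f ω ^ n| := by
      funext ω
      rw [Real.norm_eq_abs, Real.rpow_natCast, abs_pow]
    rw [heq]
    exact memLp_one_iff_integrable.mpr (h n).abs
  exact (memLp_norm_rpow_iff hf.aestronglyMeasurable hn0 hnt).mp key

lemma AllM.polyEval {f : Ω → ℝ} (hf : AllM μ f) (p : Polynomial ℝ) :
    AllM μ (fun ω => p.eval (f ω)) := by
  have : (fun ω => p.eval (f ω))
      = fun ω => ∑ i ∈ Finset.range (p.natDegree + 1), p.coeff i * f ω ^ i := by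
    funext ω; rw [Polynomial.eval_eq_sum_range]
  rw [this]
  exact AllM.finsetSum _ _ (fun i _ => (AllM.const (p.coeff i)).mul (hf.pow i))

end LpAux

section Sigma

variable [MeasurableSpace Ω] {X : ℝ → Ω → ℝ}

lemma sigmaLE_le (hX : ∀ u : ℝ, 0 < u → Measurable (X u)) (s : ℝ) :
    sigmaLE X s ≤ ‹MeasurableSpace Ω› := by
  refine iSup₂_le fun u hu => ?_
  exact measurable_iff_comap_le.mp (hX u hu.1)

lemma sigmaLE_mono {s t : ℝ} (hst : s ≤ t) : sigmaLE X s ≤ sigmaLE X t := by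
  refine iSup₂_le fun u hu => ?_
  exact le_iSup₂ (f := fun u _ => MeasurableSpace.comap (X u) inferInstance) u
    ⟨hu.1, hu.2.trans hst⟩

lemma measurable_sigmaLE {u s : ℝ} (hu : 0 < u) (hus : u ≤ s) :
    Measurable[sigmaLE X s] (X u) := by
  refine measurable_iff_comap_le.mpr ?_
  exact le_iSup₂ (f := fun u _ => MeasurableSpace.comap (X u) inferInstance) u ⟨hu, hus⟩

lemma measurable_eval_sigmaLE {u s : ℝ} (hu : 0 < u) (hus : u ≤ s) (p : Polynomial ℝ) :
    Measurable[sigmaLE X s] (fun ω => p.eval (X u ω)) :=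
  (p.continuous.measurable).comp (measurable_sigmaLE hu hus)

end Sigma

section Expand

/-- Expansion of a continuous family of polynomials of degree ≤ d in the basis M. -/
lemma expand_in_basis (M : ℕ → ℝ → Polynomial ℝ)
    (hdeg : ∀ (n : ℕ) (t : ℝ), 0 < t → (M n t).degree = n)
    (hcont : ∀ n k : ℕ, ContinuousOn (fun t => (M n t).coeff k) (Set.Ioi 0))
    (hzero : ∀ t : ℝ, 0 < t → M 0 t = 1) :
    ∀ (d : ℕ) (P : ℝ → Polynomial ℝ),
      (∀ t, 0 < t → (P t).degree ≤ (d : ℕ)) →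
      (∀ k : ℕ, ContinuousOn (fun t => (P t).coeff k) (Set.Ioi 0)) →
      ∃ c : ℕ → ℝ → ℝ, (∀ l, ContinuousOn (c l) (Set.Ioi 0)) ∧
        ∀ t, 0 < t → P t = ∑ l ∈ Finset.range (d + 1), Polynomial.C (c l t) * M l t := by
  intro d
  induction d with
  | zero =>
      intro P hP hPc
      refine ⟨fun _ t => (P t).coeff 0, fun _ => hPc 0, fun t ht => ?_⟩
      have h1 := Polynomial.eq_C_of_degree_le_zero (by exact_mod_cast hP t ht)
      simp [hzero t ht, ← h1]
  | succ d ih =>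
      intro P hP hPc
      have hMne : ∀ t : ℝ, 0 < t → (M (d+1) t).coeff (d+1) ≠ 0 := by
        intro t ht
        have hdg := hdeg (d+1) t ht
        have hnd : (M (d+1) t).natDegree = d + 1 := Polynomial.natDegree_eq_of_degree_eq_some hdg
        have hne : M (d+1) t ≠ 0 := by
          intro h0
          rw [h0, Polynomial.degree_zero] at hdg
          exact WithBot.bot_ne_coe (by exact_mod_cast hdg)
        have := Polynomial.leadingCoeff_ne_zero.mpr hne
        rwa [Polynomial.leadingCoeff, hnd] at this
      set γ : ℝ → ℝ := fun t => (P t).coeff (d+1) / (M (d+1) t).coeff (d+1) with hγ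
      have hγc : ContinuousOn γ (Set.Ioi 0) :=
        (hPc (d+1)).div (hcont (d+1) (d+1)) (fun t ht => hMne t ht)
      set Q : ℝ → Polynomial ℝ := fun t => P t - Polynomial.C (γ t) * M (d+1) t with hQ
      have hQcoeff : ∀ (k : ℕ) (t : ℝ),
          (Q t).coeff k = (P t).coeff k - γ t * (M (d+1) t).coeff k := by
        intro k t; simp [hQ]
      have hQc : ∀ k : ℕ, ContinuousOn (fun t => (Q t).coeff k) (Set.Ioi 0) := by
        intro k
        simp only [hQcoeff]
        exact (hPc k).sub (hγc.mul (hcont (d+1) k))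
      have hQdeg : ∀ t, 0 < t → (Q t).degree ≤ (d : ℕ) := by
        intro t ht
        rw [Polynomial.degree_le_iff_coeff_zero]
        intro m hm
        have hdm : d < m := by exact_mod_cast hm
        rcases eq_or_lt_of_le (Nat.succ_le_of_lt hdm) with hcase | hcase
        · rw [hQcoeff, ← hcase]
          show (P t).coeff (d+1) - γ t * (M (d+1) t).coeff (d+1) = 0
          simp only [hγ]
          rw [div_mul_cancel₀ _ (hMne t ht), sub_self]
        · rw [hQcoeff]
          have h1 : (P t).coeff m = 0 := by
            apply Polynomial.coeff_eq_zero_of_degree_lt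
            exact lt_of_le_of_lt (hP t ht) (by exact_mod_cast hcase)
          have h2 : (M (d+1) t).coeff m = 0 := by
            apply Polynomial.coeff_eq_zero_of_degree_lt
            rw [hdeg (d+1) t ht]
            exact_mod_cast hcase
          rw [h1, h2]; ring
      obtain ⟨c', hc'cont, hc'⟩ := ih Q hQdeg hQc
      refine ⟨fun l => if l = d + 1 then γ else c' l, ?_, ?_⟩
      · intro l
        by_cases hl : l = d + 1 <;> simp [hl, hγc, hc'cont l]
      · intro t ht
        rw [Finset.sum_range_succ]
        have h1 : ∀ l ∈ Finset.range (d+1),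
            Polynomial.C ((if l = d + 1 then γ else c' l) t) * M l t
              = Polynomial.C (c' l t) * M l t := by
          intro l hl
          have : l ≠ d + 1 := by
            intro h; rw [h] at hl; exact absurd (Finset.mem_range.mp hl) (by omega)
          simp [this]
        rw [Finset.sum_congr rfl h1, ← hc' t ht]
        simp [hQ]

end Expand


section CondexpAux

variable [MeasurableSpace Ω] {μ : Measure Ω} [IsProbabilityMeasure μ]

lemma condexp_sum_mul {m' : MeasurableSpace Ω} {N : ℕ} (a : ℕ → ℝ) (f : ℕ → Ω → ℝ)
    (hf : ∀ l, Integrable (f l) μ) :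
    μ[fun ω => ∑ l ∈ Finset.range N, a l * f l ω | m']
      =ᵐ[μ] fun ω => ∑ l ∈ Finset.range N, a l * (condExp m' μ (f l) ω) := by
  have h0 : (fun ω => ∑ l ∈ Finset.range N, a l * f l ω)
      = ∑ l ∈ Finset.range N, (a l • f l) := by
    funext ω; simp [Finset.sum_apply, smul_eq_mul]
  rw [h0]
  refine (condExp_finset_sum (fun l _ => (hf l).smul (a l)) m').trans ?_
  have h3 : ∀ᵐ ω ∂μ, ∀ l : ℕ, (μ[a l • f l|m']) ω = a l * (μ[f l|m']) ω := by
    rw [ae_all_iff]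
    intro l
    filter_upwards [condExp_smul (μ := μ) (m := m') (a l) (f l)] with ω hω
    simpa [smul_eq_mul] using hω
  filter_upwards [h3] with ω hω
  rw [Finset.sum_apply]
  exact Finset.sum_congr rfl (fun l _ => hω l)

end CondexpAux

section Main

variable [MeasurableSpace Ω] {μ : Measure Ω} [IsProbabilityMeasure μ]
  {X : ℝ → Ω → ℝ} {M : ℕ → ℝ → Polynomial ℝ}

lemma allM_eval (hM : IsPolyMartFamily μ X M) {t : ℝ} (ht : 0 < t) (p : Polynomial ℝ) :
    AllM μ (fun ω => p.eval (X t ω)) :=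
  (allM_of_moments (hM.meas t ht) (fun n => hM.moments n t ht)).polyEval p

lemma aux_main (hM : IsPolyMartFamily μ X M) :
    ∀ (m : ℕ) (k : Fin (m+1) → ℕ),
    ∃ φ : ℕ → (Fin (m+1) → ℝ) → ℝ,
      (∀ j : ℕ, j ≤ ∑ i, k i →
        ContinuousOn (φ j) {u : Fin (m+1) → ℝ | 0 < u ⟨0, Nat.succ_pos m⟩ ∧ StrictMono u}) ∧
      (∀ j : ℕ, (∑ i, k i) < j → φ j = 0) ∧
      ∀ (s : ℝ) (u : Fin (m+1) → ℝ), 0 < s → (∀ i, s < u i) → StrictMono u →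
        μ[fun ω => ∏ i, (M (k i) (u i)).eval (X (u i) ω) | sigmaLE X s]
          =ᵐ[μ] fun ω => ∑ j ∈ Finset.range ((∑ i, k i) + 1),
            φ j u * (M j s).eval (X s ω) := by
  intro m
  induction m with
  | zero =>
      intro k
      refine ⟨fun j _ => if j = k 0 then 1 else 0, fun _ _ => continuousOn_const, ?_, ?_⟩
      · intro j hj
        rw [Fin.sum_univ_one] at hj
        funext u
        simp [Nat.ne_of_gt hj]
      · intro s u hs hsu hmono
        have h1 := hM.mart (k 0) s (u 0) hs (hsu 0)
        have hL : (fun ω => ∏ i, (M (k i) (u i)).eval (X (u i) ω))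
            = fun ω => (M (k 0) (u 0)).eval (X (u 0) ω) := by
          funext ω; exact Fin.prod_univ_one _
        rw [hL]
        refine h1.trans (Filter.EventuallyEq.of_eq ?_)
        funext ω
        rw [Fin.sum_univ_one]
        rw [Finset.sum_congr rfl (fun j _ => by
          by_cases h : j = k 0 <;> simp [h] :
          ∀ j ∈ Finset.range (k 0 + 1), (fun j (_ : Fin 1 → ℝ) =>
            if j = k 0 then (1:ℝ) else 0) j u * (M j s).eval (X s ω)
              = if j = k 0 then (M j s).eval (X s ω) else 0)]
        rw [Finset.sum_ite_eq' (Finset.range (k 0 + 1)) (k 0)]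
        simp
  | succ m ih =>
      intro k
      classical
      set pidx : Fin (m+2) := (Fin.last m).castSucc with hpidx
      set qidx : Fin (m+2) := Fin.last (m+1) with hqidx
      set a : ℕ := k pidx with ha
      set b : ℕ := k qidx with hb
      have hPdeg : ∀ t : ℝ, 0 < t → (M a t * M b t).degree ≤ ((a+b : ℕ) : WithBot ℕ) := by
        intro t ht
        rw [Polynomial.degree_mul, hM.degree_eq a t ht, hM.degree_eq b t ht]
        exact_mod_cast le_refl ((a+b : ℕ) : WithBot ℕ)
      have hPcont : ∀ j : ℕ, ContinuousOn (fun t => (M a t * M b t).coeff j) (Set.Ioi 0) := by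
        intro j
        have hcm : (fun t => (M a t * M b t).coeff j)
            = fun t => ∑ x ∈ Finset.HasAntidiagonal.antidiagonal j, (M a t).coeff x.1 * (M b t).coeff x.2 := by
          funext t; rw [Polynomial.coeff_mul]
        rw [hcm]
        exact continuousOn_finset_sum _
          (fun x _ => (hM.coeff_cont a x.1).mul (hM.coeff_cont b x.2))
      obtain ⟨c, hccont, hcexp⟩ := expand_in_basis M hM.degree_eq hM.coeff_cont hM.zeroth
        (a+b) (fun t => M a t * M b t) hPdeg hPcont
      set kl : ℕ → Fin (m+1) → ℕ :=
        fun l => Fin.snoc (fun i : Fin m => k i.castSucc.castSucc) l with hkldef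
      have hIH := fun l => ih (kl l)
      choose ψ hψ1 hψ2 hψ3 using hIH
      set S0 : ℕ := ∑ i : Fin m, k i.castSucc.castSucc with hS0
      have hkl : ∀ l, (∑ i, kl l i) = S0 + l := by
        intro l
        rw [Fin.sum_univ_castSucc]
        simp [hkldef, hS0]
      have hT : (∑ i, k i) = S0 + a + b := by
        rw [Fin.sum_univ_castSucc, Fin.sum_univ_castSucc]
      refine ⟨fun j u => ∑ l ∈ Finset.range (a+b+1), c l (u pidx) * ψ l j (Fin.init u),
        ?_, ?_, ?_⟩
      · -- continuity
        intro j hj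
        apply continuousOn_finset_sum
        intro l hl
        have hmap1 : Set.MapsTo (fun u : Fin (m+2) → ℝ => u pidx)
            {u : Fin (m+2) → ℝ | 0 < u ⟨0, Nat.succ_pos (m+1)⟩ ∧ StrictMono u}
            (Set.Ioi 0) := by
          intro u hu
          have h0le : (⟨0, Nat.succ_pos (m+1)⟩ : Fin (m+2)) ≤ pidx := by
            simp [Fin.le_def]
          exact lt_of_lt_of_le hu.1 (hu.2.monotone h0le)
        have hc1 : ContinuousOn (fun u : Fin (m+2) → ℝ => c l (u pidx))
            {u : Fin (m+2) → ℝ | 0 < u ⟨0, Nat.succ_pos (m+1)⟩ ∧ StrictMono u} :=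
          (hccont l).comp (continuous_apply pidx).continuousOn hmap1
        have hmap2 : Set.MapsTo (fun u : Fin (m+2) → ℝ => Fin.init u)
            {u : Fin (m+2) → ℝ | 0 < u ⟨0, Nat.succ_pos (m+1)⟩ ∧ StrictMono u}
            {v : Fin (m+1) → ℝ | 0 < v ⟨0, Nat.succ_pos m⟩ ∧ StrictMono v} := by
          intro u hu
          refine ⟨hu.1, ?_⟩
          intro i j hij
          exact hu.2 (Fin.castSucc_lt_castSucc_iff.mpr hij)
        have hinitc : Continuous (fun u : Fin (m+2) → ℝ => Fin.init u) :=
          continuous_pi (fun i => continuous_apply i.castSucc)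
        have hc2 : ContinuousOn (fun u : Fin (m+2) → ℝ => ψ l j (Fin.init u))
            {u : Fin (m+2) → ℝ | 0 < u ⟨0, Nat.succ_pos (m+1)⟩ ∧ StrictMono u} := by
          rcases le_or_gt j (∑ i, kl l i) with hcase | hcase
          · exact (hψ1 l j hcase).comp hinitc.continuousOn hmap2
          · simp only [hψ2 l j hcase, Pi.zero_apply]
            exact continuousOn_const
        exact hc1.mul hc2
      · -- vanishing beyond the total degree
        intro j hj
        funext u
        apply Finset.sum_eq_zero
        intro l hl
        have hl' : l ≤ a + b := Nat.lt_succ_iff.mp (Finset.mem_range.mp hl)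
        rw [hT] at hj
        have hlt : (∑ i, kl l i) < j := by rw [hkl l]; omega
        rw [hψ2 l j hlt]
        simp
      · -- the conditional expectation identity
        intro s u hs hsu hmono
        set v : Fin (m+1) → ℝ := Fin.init u with hv
        have hsv : ∀ i, s < v i := fun i => hsu _
        have hvmono : StrictMono v := fun i j hij =>
          hmono (Fin.castSucc_lt_castSucc_iff.mpr hij)
        have hp : (0:ℝ) < u pidx := hs.trans (hsu pidx)
        have hpq : u pidx < u qidx := hmono (Fin.castSucc_lt_last _)
        have hposu : ∀ i, (0:ℝ) < u i := fun i => hs.trans (hsu i)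
        set F : Ω → ℝ := fun ω => ∏ i, (M (k i) (u i)).eval (X (u i) ω) with hF
        set G : Ω → ℝ := fun ω =>
          ∏ i : Fin (m+1), (M (k i.castSucc) (u i.castSucc)).eval (X (u i.castSucc) ω) with hG
        set H : Ω → ℝ := fun ω => (M b (u qidx)).eval (X (u qidx) ω) with hH
        set Gl : ℕ → Ω → ℝ :=
          fun l ω => ∏ i : Fin (m+1), (M (kl l i) (v i)).eval (X (v i) ω) with hGl
        have hFGH : F = G * H := by
          funext ω
          exact Fin.prod_univ_castSucc (fun i => (M (k i) (u i)).eval (X (u i) ω))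
        have hallF : AllM μ F :=
          AllM.finsetProd Finset.univ _ (fun i _ => allM_eval hM (hposu i) _)
        have hallG : AllM μ G :=
          AllM.finsetProd Finset.univ _ (fun i _ => allM_eval hM (hposu _) _)
        have hallH : AllM μ H := allM_eval hM (hposu qidx) _
        have hallGl : ∀ l, AllM μ (Gl l) := fun l =>
          AllM.finsetProd Finset.univ _ (fun i _ => allM_eval hM (hs.trans (hsv i)) _)
        have hle2 : sigmaLE X (u pidx) ≤ ‹MeasurableSpace Ω› := sigmaLE_le hM.meas _
        have hle12 : sigmaLE X s ≤ sigmaLE X (u pidx) := sigmaLE_mono (le_of_lt (hsu pidx))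
        haveI := isFiniteMeasure_trim (μ := μ) hle2
        have hGmeas : StronglyMeasurable[sigmaLE X (u pidx)] G := by
          apply Measurable.stronglyMeasurable
          apply Finset.measurable_prod
          intro i _
          exact measurable_eval_sigmaLE (hposu _)
            (hmono.monotone (Fin.castSucc_le_castSucc_iff.mpr (Fin.le_last i))) _
        have step1 : μ[F | sigmaLE X s]
            =ᵐ[μ] μ[ μ[F | sigmaLE X (u pidx)] | sigmaLE X s] :=
          (condExp_condExp_of_le hle12 hle2).symm
        have step2 : μ[F | sigmaLE X (u pidx)] =ᵐ[μ] G * μ[H | sigmaLE X (u pidx)] := by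
          rw [hFGH]
          exact condExp_mul_of_stronglyMeasurable_left hGmeas (hFGH ▸ hallF.integrable)
            hallH.integrable
        have step3 : μ[H | sigmaLE X (u pidx)]
            =ᵐ[μ] fun ω => (M b (u pidx)).eval (X (u pidx) ω) :=
          hM.mart b (u pidx) (u qidx) hp hpq
        have step4 : μ[F | sigmaLE X (u pidx)]
            =ᵐ[μ] fun ω => ∑ l ∈ Finset.range (a+b+1), c l (u pidx) * Gl l ω := by
          filter_upwards [step2, step3] with ω h2 h3
          rw [h2, Pi.mul_apply, h3]
          have hGsplit : G ω = (∏ i : Fin m,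
              (M (k i.castSucc.castSucc) (u i.castSucc.castSucc)).eval
                (X (u i.castSucc.castSucc) ω)) * (M a (u pidx)).eval (X (u pidx) ω) :=
            Fin.prod_univ_castSucc
              (fun i => (M (k i.castSucc) (u i.castSucc)).eval (X (u i.castSucc) ω))
          have hGlsplit : ∀ l, Gl l ω = (∏ i : Fin m,
              (M (k i.castSucc.castSucc) (u i.castSucc.castSucc)).eval
                (X (u i.castSucc.castSucc) ω)) * (M l (u pidx)).eval (X (u pidx) ω) := by
            intro l
            have h0 : Gl l ω = ∏ i : Fin (m+1), (M (kl l i) (v i)).eval (X (v i) ω) := rfl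
            rw [h0, Fin.prod_univ_castSucc (fun i => (M (kl l i) (v i)).eval (X (v i) ω))]
            congr 1
            · refine Finset.prod_congr rfl fun i _ => ?_
              simp [hkldef, Fin.snoc_castSucc, hv, Fin.init]
            · simp [hkldef, Fin.snoc_last, hv, Fin.init]; rfl
          rw [hGsplit]
          rw [Finset.sum_congr rfl (fun l _ => by rw [hGlsplit l])]
          have hexp := hcexp (u pidx) hp
          calc (∏ i : Fin m, (M (k i.castSucc.castSucc) (u i.castSucc.castSucc)).eval
                  (X (u i.castSucc.castSucc) ω)) * (M a (u pidx)).eval (X (u pidx) ω)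
                * (M b (u pidx)).eval (X (u pidx) ω)
              = (∏ i : Fin m, (M (k i.castSucc.castSucc) (u i.castSucc.castSucc)).eval
                  (X (u i.castSucc.castSucc) ω))
                * (M a (u pidx) * M b (u pidx)).eval (X (u pidx) ω) := by
                rw [Polynomial.eval_mul]; ring
            _ = (∏ i : Fin m, (M (k i.castSucc.castSucc) (u i.castSucc.castSucc)).eval
                  (X (u i.castSucc.castSucc) ω))
                * ((∑ l ∈ Finset.range (a+b+1),
                    Polynomial.C (c l (u pidx)) * M l (u pidx)).eval (X (u pidx) ω)) := by
                rw [← hexp]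
            _ = ∑ l ∈ Finset.range (a+b+1), c l (u pidx)
                * ((∏ i : Fin m, (M (k i.castSucc.castSucc) (u i.castSucc.castSucc)).eval
                    (X (u i.castSucc.castSucc) ω)) * (M l (u pidx)).eval (X (u pidx) ω)) := by
                rw [Polynomial.eval_finset_sum, Finset.mul_sum]
                refine Finset.sum_congr rfl fun l _ => ?_
                rw [Polynomial.eval_mul, Polynomial.eval_C]
                ring
        have step5 : μ[F | sigmaLE X s]
            =ᵐ[μ] μ[fun ω => ∑ l ∈ Finset.range (a+b+1), c l (u pidx) * Gl l ω
              | sigmaLE X s] := step1.trans (condExp_congr_ae step4)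
        have step6 := condexp_sum_mul (μ := μ) (m' := sigmaLE X s) (N := a+b+1)
          (fun l => c l (u pidx)) Gl (fun l => (hallGl l).integrable)
        have step7 : ∀ᵐ ω ∂μ, ∀ l : ℕ, condExp (sigmaLE X s) μ (Gl l) ω
            = ∑ j ∈ Finset.range ((∑ i, kl l i) + 1), ψ l j v * (M j s).eval (X s ω) := by
          rw [ae_all_iff]
          intro l
          exact hψ3 l s v hs hsv hvmono
        refine (step5.trans step6).trans ?_
        filter_upwards [step7] with ω h7
        rw [Finset.sum_congr rfl (fun l (_ : l ∈ Finset.range (a+b+1)) => by rw [h7 l])]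
        have hext : ∀ l ∈ Finset.range (a+b+1),
            (∑ j ∈ Finset.range ((∑ i, kl l i) + 1), ψ l j v * (M j s).eval (X s ω))
              = ∑ j ∈ Finset.range ((∑ i, k i) + 1), ψ l j v * (M j s).eval (X s ω) := by
          intro l hl
          have hl' : l ≤ a + b := Nat.lt_succ_iff.mp (Finset.mem_range.mp hl)
          apply Finset.sum_subset
          · apply Finset.range_subset_range.mpr
            rw [hkl l, hT]
            omega
          · intro j _ hj2
            have hj2' : (∑ i, kl l i) < j := by
              rw [Finset.mem_range, not_lt] at hj2
              omega
            rw [hψ2 l j hj2']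
            simp
        calc ∑ l ∈ Finset.range (a+b+1), c l (u pidx)
              * ∑ j ∈ Finset.range ((∑ i, kl l i) + 1), ψ l j v * (M j s).eval (X s ω)
            = ∑ l ∈ Finset.range (a+b+1), ∑ j ∈ Finset.range ((∑ i, k i) + 1),
                c l (u pidx) * (ψ l j v * (M j s).eval (X s ω)) := by
              refine Finset.sum_congr rfl fun l hl => ?_
              rw [hext l hl, Finset.mul_sum]
          _ = ∑ j ∈ Finset.range ((∑ i, k i) + 1), ∑ l ∈ Finset.range (a+b+1),
                c l (u pidx) * (ψ l j v * (M j s).eval (X s ω)) := Finset.sum_comm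
          _ = ∑ j ∈ Finset.range ((∑ i, k i) + 1),
                (∑ l ∈ Finset.range (a+b+1), c l (u pidx) * ψ l j (Fin.init u))
                  * (M j s).eval (X s ω) := by
              refine Finset.sum_congr rfl fun j _ => ?_
              rw [Finset.sum_mul]
              exact Finset.sum_congr rfl fun l _ => by rw [hv]; ring

end Main

/-- Lemma aux: For an MPR process with polynomial martingales, the
conditional expectation of a product `M_{k_1}(u_1) ⋯ M_{k_n}(u_n)` given `𝔉_{≤s}`
(with `s < u_1 < ⋯ < u_n`) is `∑_{j=0}^{k_1+⋯+k_n} φ_j(u_1,…,u_n) M_j(s)` for some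
continuous functions `φ_j`. -/
theorem condExp_product_of_martingales
    [MeasurableSpace Ω] (μ : Measure Ω) [IsProbabilityMeasure μ]
    (X : ℝ → Ω → ℝ) (M : ℕ → ℝ → Polynomial ℝ)
    (hMPR : IsMPR μ X) (hM : IsPolyMartFamily μ X M)
    (n : ℕ) (hn : 1 ≤ n) (k : Fin n → ℕ) :
    ∃ φ : ℕ → (Fin n → ℝ) → ℝ,
      (∀ j : ℕ, j ≤ ∑ i, k i →
        ContinuousOn (φ j) {u : Fin n → ℝ | 0 < u ⟨0, hn⟩ ∧ StrictMono u}) ∧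
      ∀ (s : ℝ) (u : Fin n → ℝ), 0 < s → (∀ i, s < u i) → StrictMono u →
        μ[fun ω => ∏ i, (M (k i) (u i)).eval (X (u i) ω) | sigmaLE X s]
          =ᵐ[μ] fun ω => ∑ j ∈ Finset.range ((∑ i, k i) + 1),
            φ j u * (M j s).eval (X s ω) := by
  obtain ⟨m, rfl⟩ : ∃ m, n = m + 1 := ⟨n - 1, by omega⟩
  obtain ⟨φ, hφ1, _, hφ3⟩ := aux_main hM m k
  exact ⟨φ, fun j hj => hφ1 j hj, hφ3⟩
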